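/- Let $A \in \mathbb{C}^{p\times p}$, $B\in\mathbb{C}^{q\times q}$, $C\in\mathbb{C}^{p\times q}$ and let $m,n \geq 1$ be integers. Let $G$ be a $\{1\}$-inverse of $A^m$ and $H$ a $\{1\}$-inverse of $B^n$, and suppose there exists $X_0 \in \mathbb{C}^{p\times q}$ with $A^m X_0 B^n = C$. Then the function $f : \mathbb{C}^{p\times q} \to \mathbb{C}^{p\times q}$ defined by $f(X) = X - G(A^m X B^n - C)H$ satisfies the condition of reproductivity, i.e. $f(f(X)) = f(X)$ for all $X \in \mathbb{C}^{p\times q}$. -/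
import Mathlib


/-- Remark 2.1: the function `f(X) = X - G (A^m X B^n - C) H` is reproductive,
i.e. `f ∘ f = f`, provided the equation `A^m X B^n = C` is consistent. -/
theorem stmt_1 (p q m n : ℕ) (hm : 1 ≤ m) (hn : 1 ≤ n)
    (A : Matrix (Fin p) (Fin p) ℂ) (B : Matrix (Fin q) (Fin q) ℂ)
    (C : Matrix (Fin p) (Fin q) ℂ)
    (G : Matrix (Fin p) (Fin p) ℂ) (H : Matrix (Fin q) (Fin q) ℂ)
    (hG : A ^ m * G * A ^ m = A ^ m) (hH : B ^ n * H * B ^ n = B ^ n)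
    (hcons : ∃ X₀ : Matrix (Fin p) (Fin q) ℂ, A ^ m * X₀ * B ^ n = C)
    (f : Matrix (Fin p) (Fin q) ℂ → Matrix (Fin p) (Fin q) ℂ)
    (hf : ∀ X, f X = X - G * (A ^ m * X * B ^ n - C) * H) :
    ∀ X : Matrix (Fin p) (Fin q) ℂ, f (f X) = f X := by
  obtain ⟨X₀, hX₀⟩ := hcons
  subst hX₀
  have h1 : ∀ Z : Matrix (Fin p) (Fin q) ℂ,
      A ^ m * (G * (A ^ m * Z * B ^ n) * H) * B ^ n = A ^ m * Z * B ^ n := by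
    intro Z
    have e : A ^ m * (G * (A ^ m * Z * B ^ n) * H) * B ^ n
        = (A ^ m * G * A ^ m) * Z * (B ^ n * H * B ^ n) := by
      simp only [mul_assoc, Matrix.mul_assoc]
    rw [e, hG, hH]
  intro X
  have key : ∀ Y : Matrix (Fin p) (Fin q) ℂ,
      A ^ m * f Y * B ^ n = A ^ m * X₀ * B ^ n := by
    intro Y
    rw [hf]
    have expand : A ^ m * (Y - G * (A ^ m * Y * B ^ n - A ^ m * X₀ * B ^ n) * H) * B ^ n
        = A ^ m * Y * B ^ n
          - (A ^ m * (G * (A ^ m * Y * B ^ n) * H) * B ^ n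
             - A ^ m * (G * (A ^ m * X₀ * B ^ n) * H) * B ^ n) := by
      simp only [Matrix.mul_sub, Matrix.sub_mul, mul_sub, sub_mul]
    rw [expand, h1, h1]
    abel
  rw [hf (f X), key X, sub_self, Matrix.mul_zero, Matrix.zero_mul, sub_zero]
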